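/- For every natural number m ≥ 0, one has 2·∑_{k=0}^{m} (1/(k+1))·C(2k,k)·C(2(m-k), m-k) = C(2(m+1), m+1); equivalently, the convolution of the Catalan numbers C_k = C(2k,k)/(k+1) with the central binomial coefficients C(2j,j) over k+j=m equals half the central binomial coefficient C(2m+2, m+1). -/

import Mathlib

open Finset

private def b (n : ℕ) : ℚ := (Nat.centralBinom n : ℚ)

private lemma b_rec (k : ℕ) : ((k : ℚ) + 1) * b (k + 1) = (4 * k + 2) * b k := by
  have h := Nat.succ_mul_centralBinom_succ k
  have h' := congrArg (fun x : ℕ => (x : ℚ)) h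
  push_cast at h'
  simp only [b]
  ring_nf
  ring_nf at h'
  linarith

private lemma sym (N : ℕ) :
    2 * ∑ k ∈ range (N + 1), (k : ℚ) * (b k * b (N - k)) =
      (N : ℚ) * ∑ k ∈ range (N + 1), b k * b (N - k) := by
  have h := Finset.sum_range_reflect (fun k => (k : ℚ) * (b k * b (N - k))) (N + 1)
  have h2 : ∑ k ∈ range (N + 1), ((N : ℚ) - k) * (b k * b (N - k)) =
      ∑ k ∈ range (N + 1), (k : ℚ) * (b k * b (N - k)) := by
    rw [← h]
    apply Finset.sum_congr rfl
    intro j hj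
    have hjN : j ≤ N := Nat.lt_succ_iff.mp (mem_range.mp hj)
    have e1 : N + 1 - 1 - j = N - j := by omega
    have e2 : N - (N - j) = j := Nat.sub_sub_self hjN
    rw [e1, e2, Nat.cast_sub hjN]
    ring
  rw [two_mul]
  nth_rewrite 1 [← h2]
  rw [Finset.mul_sum, ← Finset.sum_add_distrib]
  apply Finset.sum_congr rfl
  intro j hj
  ring

private lemma conv_eq (n : ℕ) : ∑ k ∈ range (n + 1), b k * b (n - k) = 4 ^ n := by
  induction n with
  | zero => simp [b, Nat.centralBinom]
  | succ n ih =>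
    have key : ∑ k ∈ range (n + 2), (k : ℚ) * (b k * b (n + 1 - k)) =
        (2 * n + 2) * 4 ^ n := by
      rw [Finset.sum_range_succ' (fun k => (k : ℚ) * (b k * b (n + 1 - k)))]
      simp only [Nat.cast_zero, zero_mul, add_zero, Nat.cast_add, Nat.cast_one]
      have hcongr : ∀ j ∈ range (n + 1), ((j : ℚ) + 1) * (b (j + 1) * b (n + 1 - (j + 1))) =
          (4 * j + 2) * (b j * b (n - j)) := by
        intro j hj
        have e : n + 1 - (j + 1) = n - j := by omega
        rw [e, ← mul_assoc, b_rec j, mul_assoc]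
      rw [Finset.sum_congr rfl hcongr]
      have expand : ∑ j ∈ range (n + 1), ((4 : ℚ) * j + 2) * (b j * b (n - j)) =
          4 * ∑ j ∈ range (n + 1), (j : ℚ) * (b j * b (n - j))
            + 2 * ∑ j ∈ range (n + 1), b j * b (n - j) := by
        rw [Finset.mul_sum, Finset.mul_sum, ← Finset.sum_add_distrib]
        apply Finset.sum_congr rfl
        intro j hj
        ring
      rw [expand, ih]
      have hs := sym n
      rw [ih] at hs
      linarith
    have hsym := sym (n + 1)
    rw [key] at hsym
    have hne : ((n : ℚ) + 1) ≠ 0 := by positivity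
    have : ((n : ℚ) + 1) * ∑ k ∈ range (n + 2), b k * b (n + 1 - k)
        = ((n : ℚ) + 1) * 4 ^ (n + 1) := by
      push_cast at hsym
      ring_nf
      ring_nf at hsym
      linarith
    exact mul_left_cancel₀ hne this

theorem catalan_central_binom_convolution (m : ℕ) :
    2 * ∑ k ∈ Finset.range (m + 1),
        (1 / (k + 1 : ℚ)) * ((2 * k).choose k : ℚ) * ((2 * (m - k)).choose (m - k) : ℚ)
      = ((2 * (m + 1)).choose (m + 1) : ℚ) := by
  simp only [← Nat.centralBinom_eq_two_mul_choose]
  rw [Finset.mul_sum]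
  have step : ∀ k ∈ range (m + 1),
      2 * ((1 / ((k : ℚ) + 1)) * (Nat.centralBinom k : ℚ) * (Nat.centralBinom (m - k) : ℚ)) =
      4 * (b k * b (m - k)) - b (k + 1) * b (m - k) := by
    intro k _
    have hb := b_rec k
    have hne : ((k : ℚ) + 1) ≠ 0 := by positivity
    simp only [b] at hb ⊢
    field_simp
    linear_combination (Nat.centralBinom (m - k) : ℚ) * hb
  rw [Finset.sum_congr rfl step, Finset.sum_sub_distrib]
  have h1 : ∑ k ∈ range (m + 1), (4 : ℚ) * (b k * b (m - k)) = 4 * 4 ^ m := by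
    rw [← Finset.mul_sum, conv_eq]
  have h2 : ∑ k ∈ range (m + 1), b (k + 1) * b (m - k) = 4 ^ (m + 1) - b (m + 1) := by
    have h3 := conv_eq (m + 1)
    rw [Finset.sum_range_succ' (fun k => b k * b (m + 1 - k))] at h3
    simp only [Nat.sub_zero] at h3
    have hcongr : ∀ k ∈ range (m + 1), b (k + 1) * b (m + 1 - (k + 1)) = b (k + 1) * b (m - k) := by
      intro k _
      have e : m + 1 - (k + 1) = m - k := by omega
      rw [e]
    rw [Finset.sum_congr rfl hcongr] at h3
    have hb0 : b 0 = 1 := by simp [b, Nat.centralBinom]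
    rw [hb0, one_mul] at h3
    linarith
  rw [h1, h2]
  show (4 : ℚ) * 4 ^ m - (4 ^ (m + 1) - b (m + 1)) = (Nat.centralBinom (m + 1) : ℚ)
  simp only [b]
  ring
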